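/- Let Δ be a Cohen-Macaulay simplicial forest on vertex set V(Δ), let R = K[x_v : v ∈ V(Δ)], and let F be a leaf of Δ. Let Δ₁ be the subcomplex with F(Δ₁) = F(Δ) ∖ N_Δ[F]. Then for all 1 ≤ k ≤ ν(Δ), the ideal quotient satisfies (I(Δ)^{[k]} : x_F) = I(Δ₁)^{[k−1]}, where by convention I(Δ₁)^{[0]} = R. -/

import Mathlib

open MvPolynomial

/-- A simplicial complex on the vertex set `V`, presented by its set of facets
(the maximal faces).  Every facet is nonempty and no facet contains another. -/
structure SimplicialComplexOn (V : Type) [Fintype V] [DecidableEq V] : Type where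
  facets : Finset (Finset V)
  nonempty_facet : ∀ F ∈ facets, F.Nonempty
  antichain : ∀ F ∈ facets, ∀ G ∈ facets, F ⊆ G → F = G

variable {V : Type} [Fintype V] [DecidableEq V]

/-- `F` is a leaf of the collection of facets `S`: either `F` is the only facet, or
there is a facet `G ≠ F` (a joint) with `F ∩ H ⊆ F ∩ G` for every facet `H ≠ F`. -/
def IsLeafOf (S : Finset (Finset V)) (F : Finset V) : Prop :=
  F ∈ S ∧ ((∀ H ∈ S, H = F) ∨
    ∃ G ∈ S, G ≠ F ∧ ∀ H ∈ S, H ≠ F → F ∩ H ⊆ F ∩ G)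

/-- The forest property for a facet collection: every nonempty subcollection
(i.e. every nonempty subcomplex) has a leaf. -/
def HasLeafProp (S : Finset (Finset V)) : Prop :=
  ∀ T ⊆ S, T.Nonempty → ∃ F, IsLeafOf T F

/-- A good leaf: a facet which is a leaf of every subcomplex containing it. -/
def IsGoodLeafOf (S : Finset (Finset V)) (F : Finset V) : Prop :=
  F ∈ S ∧ ∀ T ⊆ S, F ∈ T → IsLeafOf T F

/-- A special leaf: a leaf `F` such that for all facets `H, H' ≠ F`,
`H ∩ H' ≠ ∅` iff `(H ∩ H') \ F ≠ ∅`. -/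
def IsSpecialLeafOf (S : Finset (Finset V)) (F : Finset V) : Prop :=
  IsLeafOf S F ∧ ∀ H ∈ S, ∀ H' ∈ S, H ≠ F → H' ≠ F →
    ((H ∩ H').Nonempty ↔ ((H ∩ H') \ F).Nonempty)

/-- A matching: a subcollection of the facets that is pairwise disjoint. -/
def IsMatchingOf (S : Finset (Finset V)) (M : Finset (Finset V)) : Prop :=
  M ⊆ S ∧ ∀ F ∈ M, ∀ G ∈ M, F ≠ G → F ∩ G = ∅

/-- The matching number: maximum size of a matching. -/
noncomputable def matchingNumberOf (S : Finset (Finset V)) : ℕ :=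
  sSup {n | ∃ M : Finset (Finset V), IsMatchingOf S M ∧ M.card = n}

/-- The facet collection `S` is grafted: it decomposes as `Fs ∪ Gs` where
(1) every vertex of a `G ∈ Gs` lies in some `F ∈ Fs`, (2) `Fs` is exactly the set
of leaves of `S`, (3) `Fs` and `Gs` are disjoint, (4) the members of `Fs` are
pairwise disjoint, and (5) for each `G ∈ Gs`, deleting the facet `G` leaves a
grafted collection. -/
inductive IsGrafted : Finset (Finset V) → Prop where
  | intro (S Fs Gs : Finset (Finset V))
      (hunion : S = Fs ∪ Gs)
      (hdisj : Disjoint Fs Gs)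
      (hcover : ∀ G ∈ Gs, ∀ v ∈ G, ∃ F ∈ Fs, v ∈ F)
      (hleaves : ∀ F, IsLeafOf S F ↔ F ∈ Fs)
      (hFdisj : ∀ F ∈ Fs, ∀ F' ∈ Fs, F ≠ F' → F ∩ F' = ∅)
      (hrec : ∀ G ∈ Gs, IsGrafted (S.erase G)) :
      IsGrafted S

/-- `S` is the (minimal presentation of the) grafting of the collection `Gs`
with the simplices `Fs`. -/
def IsGraftingDecomp (S Fs Gs : Finset (Finset V)) : Prop :=
  S = Fs ∪ Gs ∧ Disjoint Fs Gs ∧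
  (∀ G ∈ Gs, ∀ v ∈ G, ∃ F ∈ Fs, v ∈ F) ∧
  (∀ F, IsLeafOf S F ↔ F ∈ Fs) ∧
  (∀ F ∈ Fs, ∀ F' ∈ Fs, F ≠ F' → F ∩ F' = ∅) ∧
  (∀ G ∈ Gs, IsGrafted (S.erase G))

/-- A Cohen-Macaulay simplicial forest, combinatorially: a grafted simplicial forest. -/
def IsCMForestFacets (S : Finset (Finset V)) : Prop :=
  HasLeafProp S ∧ IsGrafted S

/-- The closed neighborhood `N[F] = {F} ∪ {G ∈ S : G ≠ F, G ∩ F ≠ ∅}`. -/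
def closedNbhd (S : Finset (Finset V)) (F : Finset V) : Finset (Finset V) :=
  insert F (S.filter fun G => G ≠ F ∧ (G ∩ F).Nonempty)

/-- The contraction of the facet collection `S` on `A`: the minimal members of
`{F \ A : F ∈ S}`. -/
def contraction (S : Finset (Finset V)) (A : Finset V) : Finset (Finset V) :=
  (S.image fun F => F \ A).filter fun F' => ∀ G ∈ S, G \ A ⊆ F' → G \ A = F'

variable (K : Type) [Field K]

/-- The square-free monomial `x_S = ∏_{v ∈ S} x_v`. -/
noncomputable def xMon (S : Finset V) : MvPolynomial V K := ∏ v ∈ S, X v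

/-- The facet ideal `I(Δ) = ⟨x_F : F a facet⟩`. -/
noncomputable def facetIdealOf (S : Finset (Finset V)) : Ideal (MvPolynomial V K) :=
  Ideal.span { p | ∃ F ∈ S, p = xMon K F }

/-- The `k`-th square-free power of an ideal: the ideal generated by all
square-free monomials lying in `I ^ k`. -/
noncomputable def sqfreePow (I : Ideal (MvPolynomial V K)) (k : ℕ) :
    Ideal (MvPolynomial V K) :=
  Ideal.span { p | (∃ S : Finset V, p = xMon K S) ∧ p ∈ I ^ k }

/-- The depth of `R/I` with respect to the homogeneous maximal ideal
`m = ⟨x_v : v ∈ V⟩`: the largest length of an `R/I`-regular sequence of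
elements of `m`. -/
noncomputable def gradedDepth (I : Ideal (MvPolynomial V K)) : ℕ :=
  sSup {n | ∃ rs : List (MvPolynomial V K), rs.length = n ∧
    (∀ r ∈ rs, r ∈ Ideal.span (Set.range (X : V → MvPolynomial V K))) ∧
    RingTheory.Sequence.IsRegular (MvPolynomial V K ⧸ I) rs}

/-- `R/I` is Cohen-Macaulay: its depth equals its Krull dimension. -/
def IsCMQuot (I : Ideal (MvPolynomial V K)) : Prop :=
  ((gradedDepth K I : ℕ∞) : WithBot ℕ∞) = ringKrullDim (MvPolynomial V K ⧸ I)

section Statements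

variable {V : Type} [Fintype V] [DecidableEq V] (K : Type) [Field K]

section Comb

variable {V : Type} [Fintype V] [DecidableEq V]

/-- Key structural lemma: in a grafted complex presented as an antichain, a leaf
cannot be met by two disjoint facets. -/
theorem noTwoDisjoint (S : Finset (Finset V))
    (hanti : ∀ A ∈ S, ∀ B ∈ S, A ⊆ B → A = B) (hg : IsGrafted S)
    (F H1 H2 : Finset V) (hF : IsLeafOf S F) (hH1 : H1 ∈ S) (hH2 : H2 ∈ S)
    (h1F : (H1 ∩ F).Nonempty) (h2F : (H2 ∩ F).Nonempty) (h12 : H1 ∩ H2 = ∅) :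
    False := by
  classical
  induction S using Finset.strongInduction with
  | _ S IH =>
  -- basic facts
  have hH1F : H1 ≠ F := by
    rintro rfl
    obtain ⟨v, hv⟩ := h2F
    have : v ∈ H1 ∩ H2 := Finset.mem_inter.mpr ⟨(Finset.mem_inter.mp hv).2, (Finset.mem_inter.mp hv).1⟩
    simp [h12] at this
  have hH2F : H2 ≠ F := by
    rintro rfl
    obtain ⟨v, hv⟩ := h1F
    have : v ∈ H1 ∩ H2 := Finset.mem_inter.mpr ⟨(Finset.mem_inter.mp hv).1, (Finset.mem_inter.mp hv).2⟩
    simp [h12] at this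
  obtain ⟨hFS, hcase⟩ := hF
  rcases hcase with hall | ⟨J, hJS, hJF, hjoint⟩
  · exact hH1F (hall H1 hH1)
  -- J is distinct from H1, H2
  have hJH1 : J ≠ H1 := by
    rintro rfl
    obtain ⟨v, hv⟩ := h2F
    have hvF : v ∈ F ∩ H2 := Finset.mem_inter.mpr ⟨(Finset.mem_inter.mp hv).2, (Finset.mem_inter.mp hv).1⟩
    have h3 := hjoint H2 hH2 hH2F hvF
    have : v ∈ J ∩ H2 := Finset.mem_inter.mpr ⟨(Finset.mem_inter.mp h3).2, (Finset.mem_inter.mp hv).1⟩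
    simp [h12] at this
  have hJH2 : J ≠ H2 := by
    rintro rfl
    obtain ⟨v, hv⟩ := h1F
    have hvF : v ∈ F ∩ H1 := Finset.mem_inter.mpr ⟨(Finset.mem_inter.mp hv).2, (Finset.mem_inter.mp hv).1⟩
    have h3 := hjoint H1 hH1 hH1F hvF
    have : v ∈ H1 ∩ J := Finset.mem_inter.mpr ⟨(Finset.mem_inter.mp hv).1, (Finset.mem_inter.mp h3).2⟩
    simp [h12] at this
  -- the joint meets F
  have hJFne : (F ∩ J).Nonempty := by
    obtain ⟨v, hv⟩ := h1F
    exact ⟨v, hjoint H1 hH1 hH1F (Finset.mem_inter.mpr ⟨(Finset.mem_inter.mp hv).2, (Finset.mem_inter.mp hv).1⟩)⟩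
  -- destructure graftedness
  obtain ⟨S, Fs, Gs, hunion, hdisj, hcover, hleaves, hFdisj, hrec⟩ := hg
  have hFFs : F ∈ Fs := (hleaves F).mp ⟨hFS, Or.inr ⟨J, hJS, hJF, hjoint⟩⟩
  have hJGs : J ∈ Gs := by
    have hJ' : J ∈ Fs ∪ Gs := hunion ▸ hJS
    rcases Finset.mem_union.mp hJ' with h | h
    · exfalso
      have := hFdisj F hFFs J h (fun hFJ => hJF hFJ.symm)
      rw [this] at hJFne
      exact Finset.not_nonempty_empty hJFne
    · exact h
  -- delete the joint
  set S' := S.erase J with hS'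
  have hS'sub : S' ⊆ S := Finset.erase_subset _ _
  have hS'ss : S' ⊂ S := Finset.erase_ssubset hJS
  have hg' : IsGrafted S' := hrec J hJGs
  have hFS' : F ∈ S' := Finset.mem_erase.mpr ⟨fun h => hJF h.symm, hFS⟩
  have hH1S' : H1 ∈ S' := Finset.mem_erase.mpr ⟨fun h => hJH1 h.symm, hH1⟩
  have hH2S' : H2 ∈ S' := Finset.mem_erase.mpr ⟨fun h => hJH2 h.symm, hH2⟩
  by_cases hFleaf : IsLeafOf S' F
  · exact IH S' hS'ss (fun A hA B hB => hanti A (hS'sub hA) B (hS'sub hB)) hg'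
      hFleaf hH1S' hH2S'
  · -- F has a free vertex, contradicting the cover of F by leaves of S'
    have hFJ : ¬ F ⊆ J := fun h => hJF (hanti F hFS J hJS h).symm
    obtain ⟨v, hvF, hvJ⟩ := Finset.not_subset.mp hFJ
    have hvfree : ∀ H ∈ S, H ≠ F → v ∉ H := by
      intro H hH hne hvH
      exact hvJ (Finset.mem_inter.mp (hjoint H hH hne (Finset.mem_inter.mpr ⟨hvF, hvH⟩))).2
    obtain ⟨S', Fs', Gs', hunion', hdisj', hcover', hleaves', hFdisj', hrec'⟩ := hg'
    have hFGs' : F ∈ Gs' := by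
      have : F ∈ Fs' ∪ Gs' := hunion' ▸ hFS'
      rcases Finset.mem_union.mp this with h | h
      · exact absurd ((hleaves' F).mpr h) hFleaf
      · exact h
    obtain ⟨L, hLFs', hvL⟩ := hcover' F hFGs' v hvF
    have hLleaf : IsLeafOf S' L := (hleaves' L).mpr hLFs'
    have hLS : L ∈ S := hS'sub hLleaf.1
    have hLF : L ≠ F := by
      rintro rfl
      exact hFleaf hLleaf
    exact hvfree L hLS hLF hvL

end Comb
section Alg

variable {V : Type} [Fintype V] [DecidableEq V] (K : Type) [Field K]

/-- Indicator exponent vector of a finite set of variables. -/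
noncomputable def ind (S : Finset V) : V →₀ ℕ := ∑ v ∈ S, Finsupp.single v 1

lemma ind_apply (S : Finset V) (w : V) : ind S w = if w ∈ S then 1 else 0 := by
  classical
  rw [ind, Finset.sum_apply']
  rw [Finset.sum_congr rfl (fun v _ => Finsupp.single_apply)]
  exact Finset.sum_ite_eq' S w (fun _ => 1)

lemma xMon_eq (S : Finset V) :
    xMon K S = MvPolynomial.monomial (ind S) (1 : K) := by
  classical
  induction S using Finset.induction with
  | empty => simp [xMon, ind]
  | @insert a s h ih =>
    have hins : ind (insert a s) = Finsupp.single a 1 + ind s := by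
      rw [ind, ind, Finset.sum_insert h]
    rw [xMon, Finset.prod_insert h, ← xMon, ih, hins,
      show (MvPolynomial.X a : MvPolynomial V K)
        = MvPolynomial.monomial (Finsupp.single a 1) 1 from rfl,
      MvPolynomial.monomial_mul, one_mul]

lemma sum_ind_apply (l : Multiset (Finset V)) (v : V) :
    ((l.map ind).sum) v = ((l.map ind).map fun d => d v).sum := by
  have h := map_multiset_sum (Finsupp.applyAddHom v) (l.map ind)
  simpa using h

lemma sum_ind_eq_zero (l : Multiset (Finset V)) (v : V)
    (h : ∀ K ∈ l, v ∉ K) : ((l.map ind).sum) v = 0 := by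
  rw [sum_ind_apply]
  apply Multiset.sum_eq_zero
  intro x hx
  obtain ⟨d, hd, rfl⟩ := Multiset.mem_map.mp hx
  obtain ⟨A, hA, rfl⟩ := Multiset.mem_map.mp hd
  rw [ind_apply, if_neg (h A hA)]

lemma ind_le_sum (l : Multiset (Finset V)) (A : Finset V) (hA : A ∈ l) :
    ind A ≤ (l.map ind).sum := by
  rw [← Multiset.cons_erase hA, Multiset.map_cons, Multiset.sum_cons]
  exact le_add_of_nonneg_right zero_le

lemma eq_ind_support (d : V →₀ ℕ) (h : ∀ v, d v ≤ 1) : d = ind d.support := by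
  ext v
  rw [ind_apply]
  by_cases hv : v ∈ d.support
  · rw [if_pos hv]
    have h1 := h v
    have h2 : d v ≠ 0 := Finsupp.mem_support_iff.mp hv
    omega
  · rw [if_neg hv]
    exact Finsupp.notMem_support_iff.mp hv

/-- The generating family of monomials of the `k`-th power of a facet ideal. -/
lemma facetIdeal_pow_eq (S : Finset (Finset V)) (k : ℕ) :
    (facetIdealOf K S) ^ k =
      Ideal.span ((fun d => MvPolynomial.monomial d (1 : K)) ''
        {d | ∃ l : Multiset (Finset V), (∀ A ∈ l, A ∈ S) ∧
          Multiset.card l = k ∧ (l.map ind).sum = d}) := by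
  classical
  induction k with
  | zero =>
    rw [pow_zero, Ideal.one_eq_top]
    symm
    rw [Ideal.eq_top_iff_one]
    apply Ideal.subset_span
    refine ⟨0, ⟨0, ?_, rfl, rfl⟩, by simp⟩
    simp
  | succ k ih =>
    have hfac : facetIdealOf K S =
        Ideal.span ((fun d => MvPolynomial.monomial d (1 : K)) ''
          {d | ∃ F ∈ S, d = ind F}) := by
      rw [facetIdealOf]
      congr 1
      ext p
      constructor
      · rintro ⟨F, hF, rfl⟩
        exact ⟨ind F, ⟨F, hF, rfl⟩, (xMon_eq K F).symm⟩
      · rintro ⟨d, ⟨F, hF, rfl⟩, rfl⟩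
        exact ⟨F, hF, (xMon_eq K F).symm⟩
    rw [pow_succ, ih, hfac, Ideal.span_mul_span']
    congr 1
    ext p
    constructor
    · rintro ⟨a, ⟨d, ⟨l, hl, hcard, rfl⟩, rfl⟩, b, ⟨e, ⟨G, hG, rfl⟩, rfl⟩, rfl⟩
      refine ⟨(l.map ind).sum + ind G, ⟨G ::ₘ l, ?_, ?_, ?_⟩, ?_⟩
      · intro A hA
        rcases Multiset.mem_cons.mp hA with rfl | hA
        · exact hG
        · exact hl A hA
      · rw [Multiset.card_cons, hcard]
      · rw [Multiset.map_cons, Multiset.sum_cons]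
        exact add_comm _ _
      · simp only [MvPolynomial.monomial_mul, one_mul]
    · rintro ⟨d, ⟨l, hl, hcard, rfl⟩, rfl⟩
      have hne : l ≠ 0 := by
        intro h
        rw [h] at hcard
        simp at hcard
      obtain ⟨A, hA⟩ := Multiset.exists_mem_of_ne_zero hne
      refine ⟨MvPolynomial.monomial ((l.erase A).map ind).sum (1 : K),
        ⟨((l.erase A).map ind).sum, ⟨l.erase A, fun B hB => hl B (Multiset.mem_of_mem_erase hB),
          ?_, rfl⟩, rfl⟩,
        MvPolynomial.monomial (ind A) (1 : K), ⟨ind A, ⟨A, hl A hA, rfl⟩, rfl⟩, ?_⟩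
      · rw [Multiset.card_erase_of_mem hA, hcard]
        rfl
      · have hsum : ((l.erase A).map ind).sum + ind A = (l.map ind).sum := by
          conv_rhs => rw [← Multiset.cons_erase hA]
          rw [Multiset.map_cons, Multiset.sum_cons, add_comm]
        simp only [MvPolynomial.monomial_mul, one_mul, hsum]

lemma monomial_mem_pow_iff (S : Finset (Finset V)) (k : ℕ) (e : V →₀ ℕ) :
    MvPolynomial.monomial e (1 : K) ∈ (facetIdealOf K S) ^ k ↔
      ∃ l : Multiset (Finset V), (∀ A ∈ l, A ∈ S) ∧
        Multiset.card l = k ∧ (l.map ind).sum ≤ e := by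
  classical
  rw [facetIdeal_pow_eq, MvPolynomial.mem_ideal_span_monomial_image]
  simp only [MvPolynomial.support_monomial, one_ne_zero, ite_false]
  constructor
  · intro h
    obtain ⟨si, ⟨l, hl, hcard, rfl⟩, hle⟩ := h e (Finset.mem_singleton_self e)
    exact ⟨l, hl, hcard, hle⟩
  · rintro ⟨l, hl, hcard, hle⟩ xi hxi
    rw [Finset.mem_singleton] at hxi
    subst hxi
    exact ⟨(l.map ind).sum, ⟨l, hl, hcard, rfl⟩, hle⟩

/-- Membership criterion for squarefree powers of facet ideals. -/
lemma mem_sqfreePow_iff (S : Finset (Finset V)) (k : ℕ) (p : MvPolynomial V K) :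
    p ∈ sqfreePow K (facetIdealOf K S) k ↔
      ∀ a ∈ p.support, ∃ l : Multiset (Finset V), (∀ A ∈ l, A ∈ S) ∧
        Multiset.card l = k ∧ (l.map ind).sum ≤ a ∧ ∀ v, ((l.map ind).sum) v ≤ 1 := by
  classical
  have hset : { q : MvPolynomial V K | (∃ T : Finset V, q = xMon K T) ∧
      q ∈ (facetIdealOf K S) ^ k } =
      (fun d => MvPolynomial.monomial d (1 : K)) ''
        {d | (∃ T : Finset V, d = ind T) ∧
          MvPolynomial.monomial d (1 : K) ∈ (facetIdealOf K S) ^ k} := by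
    ext q
    constructor
    · rintro ⟨⟨T, rfl⟩, hq⟩
      exact ⟨ind T, ⟨⟨T, rfl⟩, (xMon_eq K T) ▸ hq⟩, (xMon_eq K T).symm⟩
    · rintro ⟨d, ⟨⟨T, rfl⟩, hd⟩, rfl⟩
      exact ⟨⟨T, (xMon_eq K T).symm⟩, hd⟩
  rw [sqfreePow, hset, MvPolynomial.mem_ideal_span_monomial_image]
  constructor
  · intro h a ha
    obtain ⟨d, ⟨⟨T, rfl⟩, hd⟩, hle⟩ := h a ha
    obtain ⟨l, hl, hcard, hsum⟩ := (monomial_mem_pow_iff K S k _).mp hd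
    refine ⟨l, hl, hcard, le_trans hsum hle, fun v => ?_⟩
    calc ((l.map ind).sum) v ≤ (ind T) v := hsum v
      _ ≤ 1 := by rw [ind_apply]; split <;> omega
  · intro h a ha
    obtain ⟨l, hl, hcard, hsum, hsq⟩ := h a ha
    refine ⟨(l.map ind).sum, ⟨⟨((l.map ind).sum).support, eq_ind_support _ hsq⟩, ?_⟩, hsum⟩
    exact (monomial_mem_pow_iff K S k _).mpr ⟨l, hl, hcard, le_refl _⟩

end Alg
theorem stmt9 (Δ : SimplicialComplexOn V)
    (hcov : ∀ v : V, ∃ F ∈ Δ.facets, v ∈ F)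
    (hCM : IsCMForestFacets Δ.facets)
    (F : Finset V) (hF : IsLeafOf Δ.facets F) :
    ∀ k : ℕ, 1 ≤ k → k ≤ matchingNumberOf Δ.facets →
      (sqfreePow K (facetIdealOf K Δ.facets) k).colon (Ideal.span {xMon K F}) =
        sqfreePow K (facetIdealOf K (Δ.facets \ closedNbhd Δ.facets F)) (k - 1) := by
  classical
  intro k hk1 _hk2
  have hanti := Δ.antichain
  have hg : IsGrafted Δ.facets := hCM.2
  have hFne : F.Nonempty := Δ.nonempty_facet F hF.1
  -- characterization of the deleted neighborhood
  have hout : ∀ A, A ∈ Δ.facets \ closedNbhd Δ.facets F → A ∩ F = ∅ := by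
    intro A hA
    have h2 := (Finset.mem_sdiff.mp hA).2
    rw [closedNbhd, Finset.mem_insert] at h2
    push_neg at h2
    obtain ⟨hAne, hAnf⟩ := h2
    by_contra hne
    exact hAnf (Finset.mem_filter.mpr ⟨(Finset.mem_sdiff.mp hA).1,
      hAne, Finset.nonempty_iff_ne_empty.mpr hne⟩)
  have hin : ∀ A, A ∈ Δ.facets → A ∩ F = ∅ → A ∈ Δ.facets \ closedNbhd Δ.facets F := by
    intro A hAS hAF
    have hAne : A ≠ F := by
      rintro rfl
      rw [Finset.inter_self] at hAF
      exact hFne.ne_empty hAF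
    refine Finset.mem_sdiff.mpr ⟨hAS, ?_⟩
    rw [closedNbhd, Finset.mem_insert]
    rintro (h | h)
    · exact hAne h
    · exact Finset.not_nonempty_empty (hAF ▸ (Finset.mem_filter.mp h).2.2)
  ext p
  rw [Ideal.mem_colon_span_singleton, mem_sqfreePow_iff, mem_sqfreePow_iff]
  constructor
  · intro h a ha
    have hmem : a + ind F ∈ (p * xMon K F).support := by
      rw [MvPolynomial.mem_support_iff, xMon_eq, MvPolynomial.coeff_mul_monomial]
      simpa using MvPolynomial.mem_support_iff.mp ha
    obtain ⟨l, hl, hcard, hsum, hsq⟩ := h _ hmem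
    have hlne : l ≠ 0 := by
      intro h0
      rw [h0] at hcard
      simp at hcard
      omega
    -- there is an element of l off which all others avoid F
    have hex : ∃ H ∈ l, ∀ K' ∈ l.erase H, K' ∩ F = ∅ := by
      by_cases hc : ∃ H ∈ l, (H ∩ F).Nonempty
      · obtain ⟨H, hH, hHF⟩ := hc
        refine ⟨H, hH, fun K' hK' => ?_⟩
        by_contra hne
        have hK'F : (K' ∩ F).Nonempty := Finset.nonempty_iff_ne_empty.mpr hne
        have hle2 : ind H + ind K' ≤ (l.map ind).sum := by
          conv_rhs => rw [← Multiset.cons_erase hH]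
          rw [Multiset.map_cons, Multiset.sum_cons]
          exact add_le_add_right (ind_le_sum _ _ hK') _
        have hHK : H ∩ K' = ∅ := by
          rw [Finset.eq_empty_iff_forall_notMem]
          intro v hv
          have h1 := Finsupp.le_def.mp hle2 v
          have h2 := hsq v
          rw [Finsupp.add_apply, ind_apply, ind_apply,
            if_pos (Finset.mem_inter.mp hv).1, if_pos (Finset.mem_inter.mp hv).2] at h1
          omega
        exact noTwoDisjoint Δ.facets hanti hg F H K' hF (hl H hH)
          (hl K' (Multiset.mem_of_mem_erase hK')) hHF hK'F hHK
      · push_neg at hc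
        obtain ⟨H, hH⟩ := Multiset.exists_mem_of_ne_zero hlne
        refine ⟨H, hH, fun K' hK' => ?_⟩
        have := hc K' (Multiset.mem_of_mem_erase hK')
        exact this
    obtain ⟨H, hH, hclean⟩ := hex
    have hdecomp : (l.map ind).sum = ind H + ((l.erase H).map ind).sum := by
      conv_lhs => rw [← Multiset.cons_erase hH]
      rw [Multiset.map_cons, Multiset.sum_cons]
    refine ⟨l.erase H, ?_, ?_, ?_, ?_⟩
    · intro A hA
      exact hin A (hl A (Multiset.mem_of_mem_erase hA)) (hclean A hA)
    · rw [Multiset.card_erase_of_mem hH, hcard]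
      rfl
    · rw [Finsupp.le_def]
      intro v
      by_cases h0 : (((l.erase H).map ind).sum) v = 0
      · rw [h0]
        exact Nat.zero_le _
      · have hvK : ∃ K' ∈ l.erase H, v ∈ K' := by
          by_contra hno
          push_neg at hno
          exact h0 (sum_ind_eq_zero _ _ hno)
        obtain ⟨K', hK', hvK'⟩ := hvK
        have hvF : v ∉ F := by
          intro hvF
          have : v ∈ K' ∩ F := Finset.mem_inter.mpr ⟨hvK', hvF⟩
          rw [hclean K' hK'] at this
          exact Finset.notMem_empty v this
        have h1 := Finsupp.le_def.mp hsum v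
        have hFv : (ind F) v = 0 := by rw [ind_apply, if_neg hvF]
        rw [hdecomp, Finsupp.add_apply, Finsupp.add_apply, hFv] at h1
        omega
    · intro v
      have h2 := hsq v
      rw [hdecomp, Finsupp.add_apply] at h2
      omega
  · intro h a ha
    rw [MvPolynomial.mem_support_iff, xMon_eq, MvPolynomial.coeff_mul_monomial'] at ha
    split_ifs at ha with hle
    · have hb : a - ind F ∈ p.support := by
        rw [MvPolynomial.mem_support_iff]
        simpa using ha
      obtain ⟨l, hl, hcard, hsum, hsq⟩ := h _ hb
      have hlF : ∀ A ∈ l, A ∩ F = ∅ := fun A hA => hout A (hl A hA)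
      refine ⟨F ::ₘ l, ?_, ?_, ?_, ?_⟩
      · intro A hA
        rcases Multiset.mem_cons.mp hA with rfl | hA
        · exact hF.1
        · exact (Finset.mem_sdiff.mp (hl A hA)).1
      · rw [Multiset.card_cons, hcard]
        omega
      · rw [Multiset.map_cons, Multiset.sum_cons]
        have h1 : ind F + (l.map ind).sum ≤ ind F + (a - ind F) :=
          add_le_add_right hsum _
        rwa [add_tsub_cancel_of_le hle] at h1
      · intro v
        rw [Multiset.map_cons, Multiset.sum_cons, Finsupp.add_apply]
        by_cases hv : v ∈ F
        · have h0 : ((l.map ind).sum) v = 0 := by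
            apply sum_ind_eq_zero
            intro A hA hvA
            have : v ∈ A ∩ F := Finset.mem_inter.mpr ⟨hvA, hv⟩
            rw [hlF A hA] at this
            exact Finset.notMem_empty v this
          rw [ind_apply, if_pos hv, h0]
        · rw [ind_apply, if_neg hv, zero_add]
          exact hsq v
    · exact absurd rfl ha

end Statements
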